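/- If x1, x2, x3 is a regular sequence in A and grade(v1, v2) = 2, then each of x1, x2, x3 is a non-zerodivisor modulo the Herzog–Northcott ideal I = (v1, v2, D). -/

import Mathlib

/-- The height of an ideal: the infimum of the heights (in the prime spectrum)
of the primes containing it. -/
noncomputable def idealHeight {A : Type*} [CommRing A] (J : Ideal A) : ℕ∞ :=
  ⨅ p : {p : PrimeSpectrum A // J ≤ p.asIdeal}, Order.height p.1

/-- The grade of an ideal: the supremum of the lengths of regular sequences
contained in it. -/
noncomputable def idealGrade {A : Type*} [CommRing A] (J : Ideal A) : ℕ∞ :=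
  sSup {n : ℕ∞ | ∃ rs : List A, (∀ r ∈ rs, r ∈ J) ∧
    RingTheory.Sequence.IsRegular A rs ∧ (rs.length : ℕ∞) = n}

section Aux

open RingTheory.Sequence

private theorem hn_quot_reg {A : Type*} [CommRing A] (N : Submodule A A) (x : A)
    (h : IsSMulRegular (A ⧸ N) x) {z : A} (hz : x * z ∈ N) : z ∈ N := by
  have h0 : x • (Submodule.Quotient.mk z : A ⧸ N) = x • (0 : A ⧸ N) := by
    rw [smul_zero, ← Submodule.Quotient.mk_smul, Submodule.Quotient.mk_eq_zero]
    simpa [smul_eq_mul] using hz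
  simpa [Ideal.Quotient.eq_zero_iff_mem] using h h0

private theorem hn_mem_smul_top {A : Type*} [CommRing A] (J : Ideal A) (z : A) :
    z ∈ (J • ⊤ : Submodule A A) ↔ z ∈ J := by
  rw [smul_eq_mul, Ideal.mul_top]

private theorem hn_reg_facts {A : Type*} [CommRing A] (x1 x2 x3 : A)
    (hreg : RingTheory.Sequence.IsRegular A [x1, x2, x3]) :
    (∀ z : A, x1 * z = 0 → z = 0) ∧
    (∀ z : A, (∃ w, x2 * z = x1 * w) → ∃ w, z = x1 * w) ∧
    (∀ z : A, (∃ α β, x3 * z = x1 * α + x2 * β) → ∃ α β, z = x1 * α + x2 * β) := by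
  have h := hreg.toIsWeaklyRegular.regular_mod_prev
  refine ⟨?_, ?_, ?_⟩
  · intro z hz
    have h0 := h 0 (by norm_num)
    have := hn_quot_reg _ _ h0 (z := z) (by
      rw [hn_mem_smul_top]; simp [hz])
    rw [hn_mem_smul_top] at this
    simpa using this
  · intro z ⟨w, hw⟩
    have hl : Ideal.ofList (List.take 1 [x1, x2, x3]) = Ideal.span {x1} := by
      simp [Ideal.ofList]
    have h1 := h 1 (by norm_num)
    have := hn_quot_reg _ _ h1 (z := z) (by
      rw [hn_mem_smul_top, hl, Ideal.mem_span_singleton']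
      exact ⟨w, by show w * x1 = x2 * z; rw [hw]; ring⟩)
    rw [hn_mem_smul_top, hl, Ideal.mem_span_singleton'] at this
    obtain ⟨a, ha⟩ := this
    exact ⟨a, by rw [← ha]; ring⟩
  · intro z ⟨α, β, hαβ⟩
    have hl : Ideal.ofList (List.take 2 [x1, x2, x3]) = Ideal.span {x1, x2} := by
      simp only [List.take, Ideal.ofList]
      congr 1
      ext w; simp
    have h2 := h 2 (by norm_num)
    have := hn_quot_reg _ _ h2 (z := z) (by
      rw [hn_mem_smul_top, hl, Ideal.mem_span_pair]
      exact ⟨α, β, by show α * x1 + β * x2 = x3 * z; rw [hαβ]; ring⟩)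
    rw [hn_mem_smul_top, hl, Ideal.mem_span_pair] at this
    obtain ⟨a, b, hab⟩ := this
    exact ⟨a, b, by rw [← hab]; ring⟩

private theorem hn_mem_span_triple {A : Type*} [CommRing A] {a b c y : A}
    (h : y ∈ Ideal.span {a, b, c}) : ∃ s t u : A, y = s * a + t * b + u * c := by
  rw [show ({a, b, c} : Set A) = insert a {b, c} from rfl, Ideal.mem_span_insert] at h
  obtain ⟨s, z, hz, rfl⟩ := h
  rw [Ideal.mem_span_pair] at hz
  obtain ⟨t, u, hz'⟩ := hz
  exact ⟨s, t, u, by rw [← hz']; ring⟩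

end Aux

/-- If `x1, x2, x3` is a regular sequence and `grade(v1, v2) = 2`, then each of
`x1, x2, x3` is a non-zerodivisor modulo the Herzog–Northcott ideal `I = (v1, v2, D)`. -/
theorem stmt_2 {A : Type*} [CommRing A] [IsNoetherianRing A] (x1 x2 x3 : A)
    (a1 a2 a3 b1 b2 b3 c1 c2 c3 : ℕ)
    (ha1 : 0 < a1) (ha2 : 0 < a2) (ha3 : 0 < a3)
    (hb1 : 0 < b1) (hb2 : 0 < b2) (hb3 : 0 < b3)
    (hc1 : c1 = a1 + b1) (hc2 : c2 = a2 + b2) (hc3 : c3 = a3 + b3)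
    (hproper : Ideal.span {x1, x2, x3} ≠ ⊤)
    (hht : idealHeight (Ideal.span {x1, x2, x3}) = 3)
    (hreg : RingTheory.Sequence.IsRegular A [x1, x2, x3])
    (v1 v2 D : A)
    (hv1 : v1 = x1 ^ c1 - x2 ^ b2 * x3 ^ a3)
    (hv2 : v2 = x2 ^ c2 - x1 ^ a1 * x3 ^ b3)
    (hD : D = x3 ^ c3 - x1 ^ b1 * x2 ^ a2)
    (hgrade : idealGrade (Ideal.span {v1, v2}) = 2)
    (I : Ideal A) (hI : I = Ideal.span {v1, v2, D}) :
    (∀ y : A, x1 * y ∈ I → y ∈ I) ∧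
    (∀ y : A, x2 * y ∈ I → y ∈ I) ∧
    (∀ y : A, x3 * y ∈ I → y ∈ I) := by
  obtain ⟨A1, rfl⟩ : ∃ n, a1 = n + 1 := ⟨a1 - 1, (Nat.succ_pred_eq_of_pos ha1).symm⟩
  obtain ⟨A2, rfl⟩ : ∃ n, a2 = n + 1 := ⟨a2 - 1, (Nat.succ_pred_eq_of_pos ha2).symm⟩
  obtain ⟨A3, rfl⟩ : ∃ n, a3 = n + 1 := ⟨a3 - 1, (Nat.succ_pred_eq_of_pos ha3).symm⟩
  obtain ⟨B1, rfl⟩ : ∃ n, b1 = n + 1 := ⟨b1 - 1, (Nat.succ_pred_eq_of_pos hb1).symm⟩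
  obtain ⟨B2, rfl⟩ : ∃ n, b2 = n + 1 := ⟨b2 - 1, (Nat.succ_pred_eq_of_pos hb2).symm⟩
  obtain ⟨B3, rfl⟩ : ∃ n, b3 = n + 1 := ⟨b3 - 1, (Nat.succ_pred_eq_of_pos hb3).symm⟩
  subst hc1 hc2 hc3
  obtain ⟨R1, R2, R3⟩ := hn_reg_facts x1 x2 x3 hreg
  -- powers of x2 can be cancelled modulo (x1)
  have P2 : ∀ (k : ℕ) (z : A), (∃ w, x2 ^ k * z = x1 * w) → ∃ w, z = x1 * w := by
    intro k
    induction k with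
    | zero => intro z ⟨w, hw⟩; exact ⟨w, by simpa using hw⟩
    | succ k ih =>
      intro z ⟨w, hw⟩
      obtain ⟨w', hw'⟩ := ih (x2 * z) ⟨w, by linear_combination hw⟩
      exact R2 z ⟨w', hw'⟩
  -- x3 can be cancelled modulo (x1, x2^k)
  have Q : ∀ (k : ℕ) (z : A), (∃ α β, x3 * z = x1 * α + x2 ^ k * β) →
      ∃ α β, z = x1 * α + x2 ^ k * β := by
    intro k
    induction k with
    | zero => intro z _; exact ⟨0, z, by ring⟩
    | succ k ih =>
      intro z ⟨α, β, h⟩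
      obtain ⟨γ, δ, hγδ⟩ := R3 z ⟨α, x2 ^ k * β, by rw [h]; ring⟩
      obtain ⟨ε, hε⟩ := R2 (x3 * δ - x2 ^ k * β) ⟨α - x3 * γ, by
        linear_combination h - x3 * hγδ⟩
      obtain ⟨ζ, η, hζη⟩ := ih δ ⟨ε, β, by linear_combination hε⟩
      exact ⟨γ + x2 * ζ, η, by linear_combination hγδ + x2 * hζη⟩
  -- powers of x3 can be cancelled modulo (x1, x2^k)
  have QQ : ∀ (m k : ℕ) (z : A), (∃ α β, x3 ^ m * z = x1 * α + x2 ^ k * β) →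
      ∃ α β, z = x1 * α + x2 ^ k * β := by
    intro m
    induction m with
    | zero => intro k z ⟨α, β, h⟩; exact ⟨α, β, by simpa using h⟩
    | succ m ih =>
      intro k z ⟨α, β, h⟩
      obtain ⟨α', β', h'⟩ := ih k (x3 * z) ⟨α, β, by linear_combination h⟩
      exact Q k z ⟨α', β', h'⟩
  have hv1I : v1 ∈ I := by rw [hI]; exact Ideal.subset_span (by simp)
  have hv2I : v2 ∈ I := by rw [hI]; exact Ideal.subset_span (by simp)
  have hDI : D ∈ I := by rw [hI]; exact Ideal.subset_span (by simp)
  -- key step: (v1, v2) : x1 ⊆ I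
  have C1 : ∀ z s t : A, x1 * z = s * v1 + t * v2 → z ∈ I := by
    intro z s t hz
    have h1 : x2 ^ (B2 + 1) * (t * x2 ^ (A2 + 1) - s * x3 ^ (A3 + 1))
        = x1 * (z - s * x1 ^ (A1 + B1 + 1) + t * x1 ^ A1 * x3 ^ (B3 + 1)) := by
      linear_combination -hz - s * hv1 - t * hv2
    obtain ⟨w, hw⟩ := P2 (B2 + 1) _ ⟨_, h1⟩
    obtain ⟨σ, h', hs⟩ := QQ (A3 + 1) (A2 + 1) s ⟨-w, t, by linear_combination -hw⟩
    obtain ⟨τ, hτ⟩ := P2 (A2 + 1) (t - x3 ^ (A3 + 1) * h')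
      ⟨σ * x3 ^ (A3 + 1) + w, by linear_combination hw + x3 ^ (A3 + 1) * hs⟩
    have key : x1 * (z - (σ * v1 + τ * v2 - h' * x1 ^ A1 * D)) = 0 := by
      linear_combination hz + v1 * hs + v2 * hτ + h' * x2 ^ (A2 + 1) * hv1
        + h' * x3 ^ (A3 + 1) * hv2 + h' * x1 ^ (A1 + 1) * hD
    have hz2 := R1 _ key
    rw [sub_eq_zero] at hz2
    rw [hz2]
    exact sub_mem (add_mem (Ideal.mul_mem_left _ _ hv1I) (Ideal.mul_mem_left _ _ hv2I))
      (Ideal.mul_mem_left _ _ hDI)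
  -- x1 is a non-zerodivisor mod I
  have L1 : ∀ y : A, x1 * y ∈ I → y ∈ I := by
    intro y hy
    rw [hI] at hy
    obtain ⟨s, t, u, h⟩ := hn_mem_span_triple hy
    rw [← hI] at hy
    have hu3 : x3 ^ (A3 + 1 + (B3 + 1)) * u
        = x1 * (y - s * x1 ^ (A1 + B1 + 1) + t * x1 ^ A1 * x3 ^ (B3 + 1)
            + u * x1 ^ B1 * x2 ^ (A2 + 1))
          + x2 ^ (B2 + 1) * (s * x3 ^ (A3 + 1) - t * x2 ^ (A2 + 1)) := by
      linear_combination -h - s * hv1 - t * hv2 - u * hD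
    obtain ⟨p, q, hu⟩ := QQ (A3 + 1 + (B3 + 1)) (B2 + 1) u ⟨_, _, hu3⟩
    have hz' : x1 * (y - p * D)
        = (s - q * x3 ^ (B3 + 1)) * v1 + (t - q * x1 ^ (B1 + 1)) * v2 := by
      linear_combination h + D * hu + q * x2 ^ (B2 + 1) * hD
        + q * x3 ^ (B3 + 1) * hv1 + q * x1 ^ (B1 + 1) * hv2
    have hyI : y - p * D ∈ I := C1 _ _ _ hz'
    have := I.add_mem hyI (Ideal.mul_mem_left I p hDI)
    simpa using this
  -- primes containing I and x2 or x3 also contain x1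
  have hpush2 : ∀ p : Ideal A, p.IsPrime → I ≤ p → x2 ∈ p → x1 ∈ p := by
    intro p hp hIp hx2
    have hv2p := hIp hv2I
    have h1 : x1 ^ (A1 + 1) * x3 ^ (B3 + 1) ∈ p := by
      have : x1 ^ (A1 + 1) * x3 ^ (B3 + 1) = x2 ^ (A2 + 1 + (B2 + 1)) - v2 := by
        rw [hv2]; ring
      rw [this]
      exact sub_mem (Ideal.pow_mem_of_mem p hx2 _ (by omega)) hv2p
    rcases hp.mul_mem_iff_mem_or_mem.mp h1 with h | h
    · exact hp.mem_of_pow_mem _ h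
    · have hx3 : x3 ∈ p := hp.mem_of_pow_mem _ h
      have hv1p := hIp hv1I
      have : x1 ^ (A1 + 1 + (B1 + 1)) ∈ p := by
        have e : x1 ^ (A1 + 1 + (B1 + 1)) = v1 + x2 ^ (B2 + 1) * x3 ^ (A3 + 1) := by
          rw [hv1]; ring
        rw [e]
        exact add_mem hv1p (Ideal.mul_mem_left _ _ (Ideal.pow_mem_of_mem p hx3 _ (by omega)))
      exact hp.mem_of_pow_mem _ this
  have hpush3 : ∀ p : Ideal A, p.IsPrime → I ≤ p → x3 ∈ p → x1 ∈ p := by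
    intro p hp hIp hx3
    have hv1p := hIp hv1I
    have : x1 ^ (A1 + 1 + (B1 + 1)) ∈ p := by
      have e : x1 ^ (A1 + 1 + (B1 + 1)) = v1 + x2 ^ (B2 + 1) * x3 ^ (A3 + 1) := by
        rw [hv1]; ring
      rw [e]
      exact add_mem hv1p (Ideal.mul_mem_left _ _ (Ideal.pow_mem_of_mem p hx3 _ (by omega)))
    exact hp.mem_of_pow_mem _ this
  -- generic reduction to the x1 case through an associated prime
  have main : ∀ x : A, (∀ p : Ideal A, p.IsPrime → I ≤ p → x ∈ p → x1 ∈ p) →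
      ∀ y : A, x * y ∈ I → y ∈ I := by
    intro x hpush y hxy
    by_contra hy
    set Jy : Ideal A := I.colon (Ideal.span {y}) with hJy
    have hJy_ne : Jy ≠ ⊤ := by
      intro ht
      apply hy
      have h1 : (1 : A) ∈ Jy := ht ▸ Submodule.mem_top
      simpa using Ideal.mem_colon_span_singleton.mp h1
    haveI := Ideal.Quotient.nontrivial_iff.mpr hJy_ne
    obtain ⟨p, hp⟩ := associatedPrimes.nonempty A (A ⧸ Jy)
    obtain ⟨hprime, m, hm⟩ := isAssociatedPrime_iff.mp hp
    obtain ⟨z, rfl⟩ := Ideal.Quotient.mk_surjective m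
    have hmem : ∀ w : A, w ∈ p ↔ w * z * y ∈ I := by
      intro w
      rw [hm, Submodule.mem_colon_singleton, Submodule.mem_bot]
      rw [Algebra.smul_def, Ideal.Quotient.algebraMap_eq, ← map_mul,
        Ideal.Quotient.eq_zero_iff_mem, hJy, Ideal.mem_colon_span_singleton]
    have hIp : I ≤ p := by
      intro w hw
      rw [hmem]
      exact I.mul_mem_right _ (I.mul_mem_right _ hw)
    have hxp : x ∈ p := by
      rw [hmem]
      have e : x * z * y = z * (x * y) := by ring
      rw [e]
      exact I.mul_mem_left _ hxy
    have hx1p : x1 ∈ p := hpush p hprime hIp hxp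
    have hzy : z * y ∈ I := L1 _ (by
      have h' := (hmem x1).mp hx1p
      have e : x1 * (z * y) = x1 * z * y := by ring
      rw [e]
      exact h')
    have h1p : (1 : A) ∈ p := by
      rw [hmem]
      simpa using hzy
    exact hprime.ne_top (Ideal.eq_top_iff_one p |>.mpr h1p)
  exact ⟨L1, main x2 hpush2, main x3 hpush3⟩
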